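/- For z ∈ (0,1) and real d ≥ 1, ∫_0^z du/(1-u^d) = Σ_{r=0}^∞ z^{rd+1}/(rd+1), and this sum is at least z·(1 - (1/(d+1))·log(1-z^d)). -/

import Mathlib

set_option maxHeartbeats 1000000

open MeasureTheory Real

theorem geometric_series_integral (z d : ℝ) (hz : z ∈ Set.Ioo (0:ℝ) 1) (hd : 1 ≤ d) :
    (∫ u in (0:ℝ)..z, 1 / (1 - u ^ d)) = (∑' r : ℕ, z ^ ((r : ℝ) * d + 1) / ((r : ℝ) * d + 1)) ∧
    (∑' r : ℕ, z ^ ((r : ℝ) * d + 1) / ((r : ℝ) * d + 1)) ≥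
      z * (1 - (1 / (d + 1)) * Real.log (1 - z ^ d)) := by
  obtain ⟨hz0, hz1⟩ := hz
  have hd0 : (0:ℝ) < d := lt_of_lt_of_le one_pos hd
  have hzd0 : 0 < z ^ d := Real.rpow_pos_of_pos hz0 d
  have hzd1 : z ^ d < 1 := Real.rpow_lt_one hz0.le hz1 hd0
  -- numerator rewrite: z ^ ((r:ℝ)*d + 1) = z * (z^d)^r
  have hnum : ∀ r : ℕ, z ^ ((r : ℝ) * d + 1) = z * (z ^ d) ^ r := by
    intro r
    rw [Real.rpow_add hz0, Real.rpow_one, mul_comm ((r:ℝ)) d, Real.rpow_mul hz0.le,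
      Real.rpow_natCast, mul_comm]
  have hdenpos : ∀ r : ℕ, (0:ℝ) < (r : ℝ) * d + 1 := by
    intro r
    positivity
  -- summability of the series
  have hsum : Summable (fun r : ℕ => z ^ ((r : ℝ) * d + 1) / ((r : ℝ) * d + 1)) := by
    apply Summable.of_nonneg_of_le
    · intro r
      positivity
    · intro r
      have h1 : z ^ ((r : ℝ) * d + 1) / ((r : ℝ) * d + 1) ≤ z ^ ((r : ℝ) * d + 1) := by
        apply div_le_self (by positivity)
        nlinarith [Nat.cast_nonneg (α := ℝ) r]
      calc z ^ ((r : ℝ) * d + 1) / ((r : ℝ) * d + 1) ≤ z ^ ((r : ℝ) * d + 1) := h1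
        _ = z * (z ^ d) ^ r := hnum r
    · exact (summable_geometric_of_lt_one hzd0.le hzd1).mul_left z
  constructor
  · -- the integral computation
    have hmeas : MeasurableSet (Set.Ioc (0:ℝ) z) := measurableSet_Ioc
    have key : ∀ r : ℕ, ∫ u in Set.Ioc (0:ℝ) z, u ^ ((r : ℝ) * d)
        = z ^ ((r : ℝ) * d + 1) / ((r : ℝ) * d + 1) := by
      intro r
      have h1 : ∫ u in Set.Ioc (0:ℝ) z, u ^ ((r : ℝ) * d)
          = ∫ u in (0:ℝ)..z, u ^ ((r : ℝ) * d) := by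
        rw [intervalIntegral.integral_of_le hz0.le]
      have hgt : (-1:ℝ) < (r:ℝ) * d :=
        lt_of_lt_of_le (by norm_num) (by positivity : (0:ℝ) ≤ (r:ℝ) * d)
      rw [h1, integral_rpow (Or.inl hgt)]
      rw [Real.zero_rpow (hdenpos r).ne', sub_zero]
    have hinter : ∫ u in Set.Ioc (0:ℝ) z, (∑' r : ℕ, u ^ ((r : ℝ) * d))
        = ∑' r : ℕ, ∫ u in Set.Ioc (0:ℝ) z, u ^ ((r : ℝ) * d) := by
      apply integral_tsum
      · intro r
        exact (Real.continuous_rpow_const (by positivity)).measurable.aestronglyMeasurable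
      · -- finiteness of sum of lintegrals
        have hb : ∀ r : ℕ, ∫⁻ u in Set.Ioc (0:ℝ) z, ‖(u : ℝ) ^ ((r : ℝ) * d)‖₊
            ≤ ENNReal.ofReal ((z ^ d) ^ r * z) := by
          intro r
          have : ∫⁻ u in Set.Ioc (0:ℝ) z, ‖(u : ℝ) ^ ((r : ℝ) * d)‖₊
              ≤ ∫⁻ _ in Set.Ioc (0:ℝ) z, ENNReal.ofReal ((z ^ d) ^ r) := by
            apply setLIntegral_mono_ae (by measurability)
            filter_upwards with u
            intro hu
            have hu0 : 0 < u := hu.1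
            have huz : u ≤ z := hu.2
            have hle : u ^ ((r : ℝ) * d) ≤ z ^ ((r : ℝ) * d) :=
              Real.rpow_le_rpow hu0.le huz (by positivity)
            have hzz : z ^ ((r : ℝ) * d) = (z ^ d) ^ r := by
              rw [mul_comm ((r:ℝ)) d, Real.rpow_mul hz0.le, Real.rpow_natCast]
            rw [← enorm_eq_nnnorm, ← ofReal_norm, Real.norm_eq_abs,
              abs_of_nonneg (Real.rpow_nonneg hu0.le _)]
            exact ENNReal.ofReal_le_ofReal (hzz ▸ hle)
          calc _ ≤ _ := this
            _ = ENNReal.ofReal ((z ^ d) ^ r) * ENNReal.ofReal z := by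
                rw [lintegral_const, Measure.restrict_apply_univ, Real.volume_Ioc, sub_zero]
            _ = ENNReal.ofReal ((z ^ d) ^ r * z) := by
                rw [ENNReal.ofReal_mul (by positivity)]
        have : (∑' r : ℕ, ∫⁻ u in Set.Ioc (0:ℝ) z, ‖(u : ℝ) ^ ((r : ℝ) * d)‖₊)
            ≤ ∑' r : ℕ, ENNReal.ofReal ((z ^ d) ^ r * z) := ENNReal.tsum_le_tsum hb
        refine ne_top_of_le_ne_top ?_ this
        rw [← ENNReal.ofReal_tsum_of_nonneg (fun r => by positivity)
          ((summable_geometric_of_lt_one hzd0.le hzd1).mul_right z)]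
        exact ENNReal.ofReal_ne_top
    have hptw : ∀ u ∈ Set.Ioc (0:ℝ) z, 1 / (1 - u ^ d) = ∑' r : ℕ, u ^ ((r : ℝ) * d) := by
      intro u hu
      have hu0 : 0 < u := hu.1
      have hud1 : u ^ d < 1 := Real.rpow_lt_one hu0.le (lt_of_le_of_lt hu.2 hz1) hd0
      have hud0 : 0 ≤ u ^ d := Real.rpow_nonneg hu0.le d
      have := tsum_geometric_of_lt_one hud0 hud1
      rw [one_div, ← this]
      congr 1
      ext r
      rw [mul_comm ((r:ℝ)) d, Real.rpow_mul hu0.le, Real.rpow_natCast]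
    calc (∫ u in (0:ℝ)..z, 1 / (1 - u ^ d))
        = ∫ u in Set.Ioc (0:ℝ) z, 1 / (1 - u ^ d) := by
          rw [intervalIntegral.integral_of_le hz0.le]
      _ = ∫ u in Set.Ioc (0:ℝ) z, (∑' r : ℕ, u ^ ((r : ℝ) * d)) :=
          setIntegral_congr_fun hmeas hptw
      _ = ∑' r : ℕ, ∫ u in Set.Ioc (0:ℝ) z, u ^ ((r : ℝ) * d) := hinter
      _ = ∑' r : ℕ, z ^ ((r : ℝ) * d + 1) / ((r : ℝ) * d + 1) := by
          exact tsum_congr key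
  · -- the lower bound
    set L := Real.log (1 - z ^ d) with hL
    have hlog : HasSum (fun n : ℕ => (z ^ d) ^ (n + 1) / (n + 1)) (-L) :=
      hasSum_pow_div_log_of_abs_lt_one (by rw [abs_of_nonneg hzd0.le]; exact hzd1)
    have hlog2 : HasSum (fun n : ℕ => z / (d + 1) * ((z ^ d) ^ (n + 1) / (n + 1)))
        (z / (d + 1) * (-L)) := hlog.mul_left _
    have hsum' : Summable (fun n : ℕ =>
        z ^ (((n + 1 : ℕ) : ℝ) * d + 1) / (((n + 1 : ℕ) : ℝ) * d + 1)) :=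
      (summable_nat_add_iff 1).2 hsum
    have hshift : (∑' r : ℕ, z ^ ((r : ℝ) * d + 1) / ((r : ℝ) * d + 1))
        = z + ∑' n : ℕ, z ^ (((n + 1 : ℕ) : ℝ) * d + 1) / (((n + 1 : ℕ) : ℝ) * d + 1) := by
      rw [Summable.tsum_eq_zero_add hsum]
      congr 1
      norm_num
    have hterm : ∀ n : ℕ, z / (d + 1) * ((z ^ d) ^ (n + 1) / (n + 1))
        ≤ z ^ (((n + 1 : ℕ) : ℝ) * d + 1) / (((n + 1 : ℕ) : ℝ) * d + 1) := by
      intro n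
      rw [hnum (n + 1)]
      have hN : (0:ℝ) ≤ z * (z ^ d) ^ (n + 1) := by positivity
      have h1 : z / (d + 1) * ((z ^ d) ^ (n + 1) / (n + 1))
          = z * (z ^ d) ^ (n + 1) / (((n:ℝ) + 1) * (d + 1)) := by
        field_simp
      have h2 : (((n + 1 : ℕ) : ℝ) * d + 1) ≤ ((n:ℝ) + 1) * (d + 1) := by
        push_cast
        nlinarith [Nat.cast_nonneg (α := ℝ) n]
      rw [h1]
      apply div_le_div_of_nonneg_left hN (hdenpos (n + 1)) h2
    have hle : z / (d + 1) * (-L)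
        ≤ ∑' n : ℕ, z ^ (((n + 1 : ℕ) : ℝ) * d + 1) / (((n + 1 : ℕ) : ℝ) * d + 1) := by
      rw [← hlog2.tsum_eq]
      exact Summable.tsum_le_tsum hterm hlog2.summable hsum'
    rw [ge_iff_le, hshift]
    have : z * (1 - 1 / (d + 1) * L) = z + z / (d + 1) * (-L) := by
      field_simp
      ring
    linarith [hle]
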